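/- Let $G=K_n$ be a complete graph ($n\ge 2$) with binomial edge ideal $J_G$. Then for every $k\ge 1$, the v-number satisfies $\mathrm{v}(J_G^k)=2k-2$; concretely, for any edge binomial $f=x_iy_j-x_jy_i$, $(J_G^k : f^{k-1})=J_G$. -/

import Mathlib

open MvPolynomial

set_option synthInstance.maxHeartbeats 1000000

namespace Paper

noncomputable section

variable (K : Type) [Field K]

/-- The v-number of a graded ideal `I`: the least `d` such that there is a homogeneous
polynomial `f` of degree `d` with `(I : f)` an associated prime of `R/I`. -/
def vNumber {σ : Type} (I : Ideal (MvPolynomial σ K)) : ℕ :=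
  sInf {d : ℕ | ∃ f : MvPolynomial σ K, f.IsHomogeneous d ∧
    IsAssociatedPrime (Submodule.colon I (Ideal.span {f})) (MvPolynomial σ K ⧸ I)}

/-- The local v-number of `I` at a prime `P`. -/
def vLocal {σ : Type} (I P : Ideal (MvPolynomial σ K)) : ℕ :=
  sInf {d : ℕ | ∃ f : MvPolynomial σ K, f.IsHomogeneous d ∧
    Submodule.colon I (Ideal.span {f}) = P}

/-- The edge binomial `f_{ij} = x_i y_j - x_j y_i`. -/
def bedge {V : Type} (i j : V) : MvPolynomial (V ⊕ V) K :=
  X (Sum.inl i) * X (Sum.inr j) - X (Sum.inl j) * X (Sum.inr i)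

/-- The binomial edge ideal of a graph `G`. -/
def beIdeal {V : Type} (G : SimpleGraph V) : Ideal (MvPolynomial (V ⊕ V) K) :=
  Ideal.span {p | ∃ i j : V, G.Adj i j ∧ p = bedge K i j}

/-- The (monomial) edge ideal of a graph `G`. -/
def edgeIdealM {V : Type} (G : SimpleGraph V) : Ideal (MvPolynomial V K) :=
  Ideal.span {p | ∃ i j : V, G.Adj i j ∧ p = X i * X j}

/-- `i` and `j` are connected by a walk in `G` avoiding the set `S`. -/
def ReachAvoid {V : Type} (G : SimpleGraph V) (S : Set V) (i j : V) : Prop :=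
  ∃ w : G.Walk i j, ∀ v ∈ w.support, v ∉ S

/-- The disjoint union of complete graphs on the connected components of `G ∖ S`. -/
def tildeG {V : Type} (G : SimpleGraph V) (S : Set V) : SimpleGraph V where
  Adj i j := i ≠ j ∧ ReachAvoid G S i j
  symm := ⟨by
    rintro i j ⟨hne, w, hw⟩
    exact ⟨hne.symm, w.reverse, by
      intro v hv
      exact hw v (by simpa [SimpleGraph.Walk.support_reverse] using hv)⟩⟩
  loopless := ⟨fun i h => h.1 rfl⟩

/-- The minimal prime `P_S` of the binomial edge ideal corresponding to a cut set `S`. -/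
def PSIdeal {V : Type} (G : SimpleGraph V) (S : Set V) : Ideal (MvPolynomial (V ⊕ V) K) :=
  Ideal.span ((fun i => (X (Sum.inl i) : MvPolynomial (V ⊕ V) K)) '' S ∪
      (fun i => (X (Sum.inr i) : MvPolynomial (V ⊕ V) K)) '' S)
    ⊔ beIdeal K (tildeG G S)

/-- Number of connected components of the induced subgraph on the complement of `S`. -/
def numComp {V : Type} (G : SimpleGraph V) (S : Set V) : ℕ :=
  Nat.card ((G.induce Sᶜ).ConnectedComponent)

/-- `S` is a cut set of `G`. -/
def IsCutSet {V : Type} (G : SimpleGraph V) (S : Set V) : Prop :=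
  ∀ s ∈ S, numComp G (S \ {s}) < numComp G S

/-- `v` is a cut vertex of `G`. -/
def IsCutVertex {V : Type} (G : SimpleGraph V) (v : V) : Prop :=
  numComp G (∅ : Set V) < numComp G {v}

/-- `G` is a cone graph: some vertex is adjacent to all others. -/
def IsConeGraph {V : Type} (G : SimpleGraph V) : Prop :=
  ∃ v : V, ∀ u : V, u ≠ v → G.Adj v u

/-- `G` (with its labelling by `Fin n`) is a closed graph. -/
def IsClosedGraph {n : ℕ} (G : SimpleGraph (Fin n)) : Prop :=
  ∀ i j k : Fin n, i < j → j < k → G.Adj i k → G.Adj i j ∧ G.Adj j k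

/-- `R/I` is Cohen-Macaulay: there is a regular sequence (inside the irrelevant
maximal ideal) on `R/I` whose length is the Krull dimension of `R/I`. -/
def IsCMQuot {σ : Type} (I : Ideal (MvPolynomial σ K)) : Prop :=
  ∃ rs : List (MvPolynomial σ K),
    (∀ f ∈ rs, f ∈ Ideal.span (Set.range (X : σ → MvPolynomial σ K))) ∧
    RingTheory.Sequence.IsRegular (MvPolynomial σ K ⧸ I)
      (rs.map (Ideal.Quotient.mk I)) ∧
    ((rs.length : ℕ) : WithBot (WithTop ℕ)) = ringKrullDim (MvPolynomial σ K ⧸ I)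

section Regularity

variable {σ : Type} [Fintype σ] [DecidableEq σ]

/-- An arbitrary linear order on a finite type. -/
def fintypeLO (σ : Type) [Fintype σ] [DecidableEq σ] : LinearOrder σ :=
  LinearOrder.lift' (Fintype.equivFin σ) (Fintype.equivFin σ).injective

/-- Term of homological degree `i` of the Koszul complex of `R/I` with respect to all the
variables; its homology computes `Tor_i(R/I, K)`. -/
abbrev KC (I : Ideal (MvPolynomial σ K)) (i : ℕ) : Type :=
  {T : Finset σ // T.card = i} → MvPolynomial σ K ⧸ I

/-- The Koszul differential. -/
def koszD (I : Ideal (MvPolynomial σ K)) (i : ℕ) (f : KC K I (i + 1)) : KC K I i :=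
  letI LO := fintypeLO σ
  letI : (p : Prop) → Decidable p := Classical.propDecidable
  fun T => ∑ t ∈ (Finset.univ \ T.1).attach,
    ((-1 : MvPolynomial σ K ⧸ I) ^ ((T.1.filter (fun a => LO.lt a t.1)).card)) *
      (Ideal.Quotient.mk I (X t.1) *
        f ⟨insert t.1 T.1, by
          rw [Finset.card_insert_of_notMem (Finset.mem_sdiff.mp t.2).2, T.2]⟩)

/-- Being a cycle in the Koszul complex. -/
def isCycle (I : Ideal (MvPolynomial σ K)) : (i : ℕ) → KC K I i → Prop
  | 0, _ => True
  | (i + 1), f => koszD K I i f = 0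

/-- Nonvanishing of the graded Betti number `β_{i,j}(R/I)`: the `i`-th Koszul homology has a
nonzero class of internal degree `j`. -/
def bettiNe (I : Ideal (MvPolynomial σ K)) (i j : ℕ) : Prop :=
  ∃ f : KC K I i,
    (∀ T, ∃ p : MvPolynomial σ K, p.IsHomogeneous (j - i) ∧ Ideal.Quotient.mk I p = f T) ∧
    isCycle K I i f ∧ ¬ ∃ g : KC K I (i + 1), koszD K I i g = f

/-- The Castelnuovo-Mumford regularity of `R/I`, as `max { j - i : β_{i,j}(R/I) ≠ 0 }`. -/
def reg (I : Ideal (MvPolynomial σ K)) : ℕ :=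
  sSup {r : ℕ | ∃ i j : ℕ, j = i + r ∧ bettiNe K I i j}

end Regularity

end

end Paper

namespace Paper

variable (K : Type) [Field K]

section Aux
variable {n : ℕ}

local notation "R" => MvPolynomial (Fin n ⊕ Fin n) K
local notation "Jn" => beIdeal K (⊤ : SimpleGraph (Fin n))

lemma bedge_mem {i j : Fin n} (hij : i ≠ j) : bedge K i j ∈ Jn :=
  Ideal.subset_span ⟨i, j, by simp [hij], rfl⟩

/-- exponent finsupp with x-part `xp` and y-part `yp` -/
noncomputable def E (xp yp : Fin n → ℕ) : (Fin n ⊕ Fin n) →₀ ℕ :=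
  Finsupp.equivFunOnFinite.symm (Sum.elim xp yp)

@[simp] lemma E_inl (xp yp : Fin n → ℕ) (m : Fin n) : E xp yp (Sum.inl m) = xp m := rfl
@[simp] lemma E_inr (xp yp : Fin n → ℕ) (m : Fin n) : E xp yp (Sum.inr m) = yp m := rfl

lemma E_add (a b a' b' : Fin n → ℕ) :
    E a b + E a' b' = E (fun m => a m + a' m) (fun m => b m + b' m) := by
  ext v; rcases v with m | m <;> simp

lemma E_congr {a b a' b' : Fin n → ℕ} (h1 : ∀ m, a m = a' m) (h2 : ∀ m, b m = b' m) :
    E a b = E a' b' := by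
  ext v; rcases v with m | m <;> simp [h1, h2]

lemma X_inl_mul_X_inr (q p : Fin n) :
    (X (Sum.inl q) * X (Sum.inr p) : R) =
      monomial (E (fun m => if q = m then 1 else 0) (fun m => if p = m then 1 else 0)) 1 := by
  have he : Finsupp.single (Sum.inl q) 1 + Finsupp.single (Sum.inr p) 1 =
      E (fun m => if q = m then 1 else 0) (fun m => if p = m then 1 else 0) := by
    ext v; rcases v with m | m <;> simp [Finsupp.single_apply]
  rw [X, X, monomial_mul, one_mul, he]

lemma step (c b : Fin n → ℕ) (p q : Fin n) (hpq : p ≠ q) (hb : ∀ m, b m ≤ c m)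
    (hbp : 1 ≤ b p) (hq : b q < c q) :
    (monomial (E (fun m => c m - b m) b) 1 : R) -
      monomial (E (fun m => c m - (if p = m then b m - 1 else if q = m then b m + 1 else b m))
        (fun m => if p = m then b m - 1 else if q = m then b m + 1 else b m)) 1
      ∈ Jn := by
  set mx : Fin n → ℕ := fun m => (c m - b m) - (if q = m then 1 else 0) with hmx
  set my : Fin n → ℕ := fun m => b m - (if p = m then 1 else 0) with hmy
  have key : (monomial (E (fun m => c m - b m) b) 1 : R) -
      monomial (E (fun m => c m - (if p = m then b m - 1 else if q = m then b m + 1 else b m))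
        (fun m => if p = m then b m - 1 else if q = m then b m + 1 else b m)) 1
      = monomial (E mx my) 1 * bedge K q p := by
    rw [bedge, X_inl_mul_X_inr, X_inl_mul_X_inr, mul_sub, monomial_mul, monomial_mul, one_mul,
      E_add, E_add]
    congr 2 <;> refine congrArg _ (E_congr ?_ ?_)
    · intro m
      by_cases h1 : q = m
      · subst h1; have := hb q; simp [hmx]; omega
      · simp [hmx, h1]
    · intro m
      by_cases h1 : p = m
      · subst h1; simp [hmy]; omega
      · simp [hmy, h1]
    · intro m
      by_cases h1 : p = m
      · subst h1
        have h2 : ¬ (q = p) := fun h => hpq h.symm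
        have := hb p; simp [hmx, h2]; omega
      · by_cases h2 : q = m
        · subst h2; have := hb q; simp [hmx, h1]; omega
        · simp [hmx, h1, h2]
    · intro m
      by_cases h1 : p = m
      · subst h1
        have h2 : ¬ (q = p) := fun h => hpq h.symm
        simp [hmy, h2]
      · by_cases h2 : q = m
        · subst h2; simp [hmy, h1]
        · simp [hmy, h1, h2]
  rw [key]
  exact Ideal.mul_mem_left _ _ (bedge_mem K hpq.symm)

end Aux
section Aux2
variable (K : Type) [Field K] {n : ℕ}
open MvPolynomial
local notation "R" => MvPolynomial (Fin n ⊕ Fin n) K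
local notation "Jn" => beIdeal K (⊤ : SimpleGraph (Fin n))

lemma sum_two_split (f : Fin n → ℕ) (p q : Fin n) (hpq : p ≠ q) :
    ∑ m, f m = f p + f q + ∑ m ∈ (Finset.univ.erase p).erase q, f m := by
  have h1 : q ∈ Finset.univ.erase p := Finset.mem_erase.mpr ⟨Ne.symm hpq, Finset.mem_univ q⟩
  rw [← Finset.sum_erase_add _ _ (Finset.mem_univ p), ← Finset.sum_erase_add _ _ h1]; ring

lemma conn : ∀ (t : ℕ) (c b b' : Fin n → ℕ), (∀ m, b m ≤ c m) → (∀ m, b' m ≤ c m) →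
    (∑ m, b m = ∑ m, b' m) → (∑ m, ((b m - b' m) + (b' m - b m)) ≤ t) →
    (monomial (E (fun m => c m - b m) b) 1 : R) - monomial (E (fun m => c m - b' m) b') 1 ∈ Jn := by
  intro t
  induction t with
  | zero =>
    intro c b b' hb hb' hsum hdist
    have hz : ∀ m ∈ Finset.univ, ((b m - b' m) + (b' m - b m)) = 0 :=
      (Finset.sum_eq_zero_iff).mp (Nat.le_zero.mp hdist)
    have heq : ∀ m, b m = b' m := fun m => by have := hz m (Finset.mem_univ m); omega
    have : E (fun m => c m - b m) b = E (fun m => c m - b' m) b' :=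
      E_congr (fun m => by rw [heq m]) heq
    rw [this, sub_self]; exact zero_mem _
  | succ t IH =>
    intro c b b' hb hb' hsum hdist
    by_cases hbb : ∀ m, b m = b' m
    · have : E (fun m => c m - b m) b = E (fun m => c m - b' m) b' :=
        E_congr (fun m => by rw [hbb m]) hbb
      rw [this, sub_self]; exact zero_mem _
    · push_neg at hbb
      have hp : ∃ p, b' p < b p := by
        by_contra hc
        push_neg at hc
        obtain ⟨m0, hm0⟩ := hbb
        have : ∑ m, b m < ∑ m, b' m :=
          Finset.sum_lt_sum (fun m _ => hc m) ⟨m0, Finset.mem_univ m0, by have := hc m0; omega⟩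
        omega
      have hqex : ∃ q, b q < b' q := by
        by_contra hc
        push_neg at hc
        obtain ⟨m0, hm0⟩ := hbb
        have : ∑ m, b' m < ∑ m, b m :=
          Finset.sum_lt_sum (fun m _ => hc m) ⟨m0, Finset.mem_univ m0, by have := hc m0; omega⟩
        omega
      obtain ⟨p, hp⟩ := hp
      obtain ⟨q, hq⟩ := hqex
      have hpq : p ≠ q := by intro h; rw [h] at hp; omega
      set b'' : Fin n → ℕ := fun m => if p = m then b m - 1 else if q = m then b m + 1 else b m
        with hb''def
      have hbp2 : b'' p = b p - 1 := by simp [hb''def]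
      have hbq2 : b'' q = b q + 1 := by simp [hb''def, hpq]
      have hrest : ∀ m ∈ (Finset.univ.erase p).erase q, b'' m = b m := by
        intro m hm
        have h1 : m ≠ q := (Finset.mem_erase.mp hm).1
        have h2 : m ≠ p := (Finset.mem_erase.mp ((Finset.mem_erase.mp hm).2)).1
        simp [hb''def, Ne.symm h2, Ne.symm h1]
      have mem1 := step K c b p q hpq hb (by omega) (lt_of_lt_of_le hq (hb' q))
      have hb''le : ∀ m, b'' m ≤ c m := by
        intro m
        rcases eq_or_ne p m with rfl | h1
        · have := hb p; simp [hb''def]; omega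
        · rcases eq_or_ne q m with rfl | h2
          · have := hb' q; simp [hb''def, h1]; omega
          · simp [hb''def, h1, h2]; exact hb m
      have hsum2 : ∑ m, b'' m = ∑ m, b' m := by
        have e1 := sum_two_split b'' p q hpq
        have e2 := sum_two_split b p q hpq
        have e3 : ∑ m ∈ (Finset.univ.erase p).erase q, b'' m
            = ∑ m ∈ (Finset.univ.erase p).erase q, b m := Finset.sum_congr rfl hrest
        omega
      have hdist2 : ∑ m, ((b'' m - b' m) + (b' m - b'' m)) ≤ t := by
        have e1 := sum_two_split (fun m => (b'' m - b' m) + (b' m - b'' m)) p q hpq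
        have e2 := sum_two_split (fun m => (b m - b' m) + (b' m - b m)) p q hpq
        have e3 : ∑ m ∈ (Finset.univ.erase p).erase q, ((b'' m - b' m) + (b' m - b'' m))
            = ∑ m ∈ (Finset.univ.erase p).erase q, ((b m - b' m) + (b' m - b m)) :=
          Finset.sum_congr rfl (fun m hm => by rw [hrest m hm])
        omega
      have mem2 := IH c b'' b' hb''le hb' hsum2 hdist2
      have hfin := add_mem mem1 mem2
      have heq2 : (fun m => c m - (if p = m then b m - 1 else if q = m then b m + 1 else b m))
          = fun m => c m - b'' m := by rw [hb''def]
      rw [heq2, ← hb''def] at hfin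
      simpa [sub_add_sub_cancel] using hfin

end Aux2
section Aux3
variable (K : Type) [Field K] {n : ℕ}
open MvPolynomial
local notation "R" => MvPolynomial (Fin n ⊕ Fin n) K
local notation "Jn" => beIdeal K (⊤ : SimpleGraph (Fin n))

/-- the Segre-type substitution `x_m ↦ x_m x_i`, `y_m ↦ x_m y_i` -/
noncomputable def psi (i : Fin n) : MvPolynomial (Fin n ⊕ Fin n) K →ₐ[K] MvPolynomial (Fin n ⊕ Fin n) K :=
  aeval (Sum.elim (fun m => X (Sum.inl m) * X (Sum.inl i)) (fun m => X (Sum.inl m) * X (Sum.inr i)))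

/-- total x-degree -/
def Ad (d : (Fin n ⊕ Fin n) →₀ ℕ) : ℕ := ∑ m, d (Sum.inl m)
/-- total y-degree -/
def Bd (d : (Fin n ⊕ Fin n) →₀ ℕ) : ℕ := ∑ m, d (Sum.inr m)
/-- folded multidegree -/
def ccf (d : (Fin n ⊕ Fin n) →₀ ℕ) : Fin n → ℕ := fun t => d (Sum.inl t) + d (Sum.inr t)

/-- image exponent under `psi` -/
noncomputable def Ee (i : Fin n) (d : (Fin n ⊕ Fin n) →₀ ℕ) : (Fin n ⊕ Fin n) →₀ ℕ :=
  Finsupp.single (Sum.inl i) (Ad d) + Finsupp.single (Sum.inr i) (Bd d) + E (ccf d) (fun _ => 0)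

lemma psi_monomial (i : Fin n) (d : (Fin n ⊕ Fin n) →₀ ℕ) (r : K) :
    psi K i (monomial d r) = monomial (Ee i d) r := by
  induction d using Finsupp.induction generalizing r with
  | zero =>
    have h1 : Ee i 0 = 0 := by
      ext v; rcases v with t | t <;>
        simp [Ee, Ad, Bd, ccf, E, Finsupp.single_apply]
    rw [h1]; simp [psi, algebraMap_eq]
  | single_add a e d' ha he IH =>
    have hsplit : monomial (Finsupp.single a e + d') r
        = monomial (Finsupp.single a e) 1 * monomial d' r := by
      rw [monomial_mul, one_mul]
    rw [hsplit, map_mul, IH, ← X_pow_eq_monomial, map_pow]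
    rcases a with m0 | m0
    · have hX : psi K i (X (Sum.inl m0)) = X (Sum.inl m0) * X (Sum.inl i) := by
        simp [psi]
      rw [hX, mul_pow, X_pow_eq_monomial, X_pow_eq_monomial, monomial_mul, monomial_mul]
      simp only [one_mul]
      have hexp : (Finsupp.single (Sum.inl m0) e + Finsupp.single (Sum.inl i) e) + Ee i d'
          = Ee i (Finsupp.single (Sum.inl m0) e + d') := by
        ext v; rcases v with t | t <;>
          simp [Ee, Ad, Bd, ccf, E, Finsupp.single_apply, Finset.sum_add_distrib,
            Finset.sum_ite_eq] <;> split_ifs <;> omega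
      rw [hexp]
    · have hX : psi K i (X (Sum.inr m0)) = X (Sum.inl m0) * X (Sum.inr i) := by
        simp [psi]
      rw [hX, mul_pow, X_pow_eq_monomial, X_pow_eq_monomial, monomial_mul, monomial_mul]
      simp only [one_mul]
      have hexp : (Finsupp.single (Sum.inl m0) e + Finsupp.single (Sum.inr i) e) + Ee i d'
          = Ee i (Finsupp.single (Sum.inr m0) e + d') := by
        ext v; rcases v with t | t <;>
          simp [Ee, Ad, Bd, ccf, E, Finsupp.single_apply, Finset.sum_add_distrib,
            Finset.sum_ite_eq] <;> split_ifs <;> omega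
      rw [hexp]

end Aux3
section Aux4
variable (K : Type) [Field K] {n : ℕ}
open MvPolynomial
local notation "R" => MvPolynomial (Fin n ⊕ Fin n) K
local notation "Jn" => beIdeal K (⊤ : SimpleGraph (Fin n))

lemma Ee_apply_inl (i : Fin n) (d : (Fin n ⊕ Fin n) →₀ ℕ) (t : Fin n) :
    Ee i d (Sum.inl t) = (if i = t then Ad d else 0) + ccf d t := by
  simp [Ee, E, Finsupp.single_apply]

lemma Ee_apply_inr (i : Fin n) (d : (Fin n ⊕ Fin n) →₀ ℕ) (t : Fin n) :
    Ee i d (Sum.inr t) = (if i = t then Bd d else 0) := by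
  simp [Ee, E, Finsupp.single_apply]

lemma AB_eq (d : (Fin n ⊕ Fin n) →₀ ℕ) : Ad d + Bd d = ∑ t, ccf d t := by
  simp [Ad, Bd, ccf, Finset.sum_add_distrib]

lemma Ee_inj (i : Fin n) {d d' : (Fin n ⊕ Fin n) →₀ ℕ} (h : Ee i d = Ee i d') :
    ccf d = ccf d' ∧ Bd d = Bd d' := by
  have happ : ∀ v, Ee i d v = Ee i d' v := fun v => by rw [h]
  have hB : Bd d = Bd d' := by
    have := happ (Sum.inr i); rw [Ee_apply_inr, Ee_apply_inr, if_pos rfl, if_pos rfl] at this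
    exact this
  have hct : ∀ t, t ≠ i → ccf d t = ccf d' t := by
    intro t ht
    have := happ (Sum.inl t)
    rw [Ee_apply_inl, Ee_apply_inl, if_neg (fun hh => ht hh.symm), if_neg (fun hh => ht hh.symm)]
      at this
    omega
  have hrest : ∑ t ∈ Finset.univ.erase i, ccf d t = ∑ t ∈ Finset.univ.erase i, ccf d' t :=
    Finset.sum_congr rfl (fun t ht => hct t (Finset.mem_erase.mp ht).1)
  have hsum1 := AB_eq d
  have hsum2 := AB_eq d'
  have e1 : ∑ t ∈ Finset.univ.erase i, ccf d t + ccf d i = ∑ t, ccf d t :=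
    Finset.sum_erase_add _ _ (Finset.mem_univ i)
  have e2 : ∑ t ∈ Finset.univ.erase i, ccf d' t + ccf d' i = ∑ t, ccf d' t :=
    Finset.sum_erase_add _ _ (Finset.mem_univ i)
  have hi := happ (Sum.inl i)
  rw [Ee_apply_inl, Ee_apply_inl, if_pos rfl, if_pos rfl] at hi
  have hci : ccf d i = ccf d' i := by omega
  refine ⟨funext fun t => ?_, hB⟩
  rcases eq_or_ne t i with rfl | ht
  · exact hci
  · exact hct t ht

open scoped Classical in
noncomputable def NFb (c : Fin n → ℕ) (Bv : ℕ) : Fin n → ℕ :=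
  if h : ∃ b : Fin n → ℕ, (∀ m, b m ≤ c m) ∧ ∑ m, b m = Bv then h.choose else 0

lemma NFb_spec {c : Fin n → ℕ} {Bv : ℕ}
    (h : ∃ b : Fin n → ℕ, (∀ m, b m ≤ c m) ∧ ∑ m, b m = Bv) :
    (∀ m, NFb c Bv m ≤ c m) ∧ ∑ m, NFb c Bv m = Bv := by
  classical rw [NFb, dif_pos h]; exact h.choose_spec

noncomputable def nf (d : (Fin n ⊕ Fin n) →₀ ℕ) : (Fin n ⊕ Fin n) →₀ ℕ :=
  E (fun m => ccf d m - NFb (ccf d) (Bd d) m) (NFb (ccf d) (Bd d))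

lemma d_exists (d : (Fin n ⊕ Fin n) →₀ ℕ) :
    ∃ b : Fin n → ℕ, (∀ m, b m ≤ ccf d m) ∧ ∑ m, b m = Bd d :=
  ⟨fun m => d (Sum.inr m), fun m => by simp [ccf], rfl⟩

lemma ccf_nf (d : (Fin n ⊕ Fin n) →₀ ℕ) : ccf (nf d) = ccf d := by
  funext t
  have h1 : NFb (ccf d) (Bd d) t ≤ d (Sum.inl t) + d (Sum.inr t) :=
    (NFb_spec (d_exists d)).1 t
  simp only [ccf, nf, E_inl, E_inr]
  omega

lemma Bd_nf (d : (Fin n ⊕ Fin n) →₀ ℕ) : Bd (nf d) = Bd d := by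
  have h2 := (NFb_spec (d_exists d)).2
  simp only [Bd, nf, E_inr]
  exact h2

lemma nf_eq_of {d d' : (Fin n ⊕ Fin n) →₀ ℕ} (h1 : ccf d = ccf d') (h2 : Bd d = Bd d') :
    nf d = nf d' := by
  rw [nf, nf, h1, h2]

lemma mono_nf (d : (Fin n ⊕ Fin n) →₀ ℕ) :
    (monomial d (1:K) : R) - monomial (nf d) 1 ∈ Jn := by
  have hd : d = E (fun m => ccf d m - d (Sum.inr m)) (fun m => d (Sum.inr m)) := by
    ext v; rcases v with t | t <;> simp [ccf]
  have hc := conn K (∑ m, ((d (Sum.inr m) - NFb (ccf d) (Bd d) m)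
      + (NFb (ccf d) (Bd d) m - d (Sum.inr m)))) (ccf d) (fun m => d (Sum.inr m))
      (NFb (ccf d) (Bd d)) (fun m => by simp [ccf]) (NFb_spec (d_exists d)).1
      (by rw [(NFb_spec (d_exists d)).2]; rfl) le_rfl
  rw [nf, ← hd] at *
  exact hc

lemma psi_bedge_zero (i : Fin n) (a b : Fin n) : psi K i (bedge K a b) = 0 := by
  simp only [bedge, psi, map_sub, map_mul, aeval_X, Sum.elim_inl, Sum.elim_inr]
  ring

lemma Jn_le_ker (i : Fin n) : Jn ≤ RingHom.ker (psi K i).toRingHom := by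
  rw [beIdeal, Ideal.span_le]
  rintro p ⟨a, b, hab, rfl⟩
  simp only [SetLike.mem_coe, RingHom.mem_ker, AlgHom.toRingHom_eq_coe, RingHom.coe_coe]
  exact psi_bedge_zero K i a b

lemma mem_of_psi_zero (i : Fin n) (g : MvPolynomial (Fin n ⊕ Fin n) K)
    (hg : psi K i g = 0) : g ∈ Jn := by
  set h : MvPolynomial (Fin n ⊕ Fin n) K
    := ∑ d ∈ g.support, monomial (nf d) (coeff d g) with hh
  have hgh : g - h ∈ Jn := by
    have : g - h = ∑ d ∈ g.support,
        (monomial d (coeff d g) - monomial (nf d) (coeff d g)) := by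
      rw [Finset.sum_sub_distrib, hh]
      congr 1
      exact (support_sum_monomial_coeff g).symm
    rw [this]
    refine Submodule.sum_mem _ (fun d _ => ?_)
    have heq : monomial d (coeff d g) - monomial (nf d) (coeff d g)
        = C (coeff d g) * (monomial d 1 - monomial (nf d) 1) := by
      rw [mul_sub, C_mul_monomial, C_mul_monomial, mul_one]
    rw [heq]
    exact Ideal.mul_mem_left _ _ (mono_nf K d)
  have hpsih : psi K i h = 0 := by
    have h1 : psi K i (g - h) = 0 := Jn_le_ker K i hgh
    rw [map_sub, hg, zero_sub, neg_eq_zero] at h1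
    exact h1
  have hsup : ∀ e ∈ h.support, ∃ d, e = nf d := by
    intro e he
    rw [hh] at he
    obtain ⟨d, _, hd2⟩ := Finset.mem_biUnion.mp (MvPolynomial.support_sum he)
    have := support_monomial_subset hd2
    exact ⟨d, Finset.mem_singleton.mp this⟩
  have hh0 : h = 0 := by
    by_contra h0
    obtain ⟨d0, hd0⟩ := Finset.nonempty_iff_ne_empty.mpr
      (fun hemp => h0 (support_eq_empty.mp hemp))
    have hrepr : psi K i h = ∑ d ∈ h.support, monomial (Ee i d) (coeff d h) := by
      conv_lhs => rw [← support_sum_monomial_coeff h]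
      rw [map_sum]
      exact Finset.sum_congr rfl (fun d _ => psi_monomial K i d (coeff d h))
    have hco : coeff (Ee i d0) (psi K i h) = coeff d0 h := by
      rw [hrepr, coeff_sum]
      rw [Finset.sum_eq_single_of_mem d0 hd0]
      · rw [coeff_monomial, if_pos rfl]
      · intro d hd hne
        rw [coeff_monomial, if_neg]
        intro hEe
        obtain ⟨a, rfl⟩ := hsup d hd
        obtain ⟨a0, rfl⟩ := hsup d0 hd0
        have hinj := Ee_inj i hEe
        have hcc : ccf a = ccf a0 := by rw [← ccf_nf a, ← ccf_nf a0]; exact hinj.1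
        have hBB : Bd a = Bd a0 := by rw [← Bd_nf a, ← Bd_nf a0]; exact hinj.2
        exact hne (nf_eq_of hcc hBB)
    rw [hpsih, coeff_zero] at hco
    exact (mem_support_iff.mp hd0) hco.symm
  have : g = g - h := by rw [hh0, sub_zero]
  rw [this]
  exact hgh

end Aux4
section Aux5
variable (K : Type) [Field K] {n : ℕ}
open MvPolynomial
local notation "R" => MvPolynomial (Fin n ⊕ Fin n) K
local notation "Jn" => beIdeal K (⊤ : SimpleGraph (Fin n))

noncomputable def theta (i : Fin n) :
    MvPolynomial (Fin n ⊕ Fin n) K →ₐ[K] Polynomial (MvPolynomial (Fin n ⊕ Fin n) K) :=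
  aeval (Sum.elim (fun m => Polynomial.C (X (Sum.inl m) * X (Sum.inl i)))
    (fun m => Polynomial.C (X (Sum.inl m) * X (Sum.inr i))
      + Polynomial.X * Polynomial.C (X (Sum.inr m))))

lemma theta_bedge (i a b : Fin n) :
    theta K i (bedge K a b)
      = Polynomial.X * Polynomial.C (X (Sum.inl i) * bedge K a b) := by
  simp only [bedge, theta, aeval_X, Sum.elim_inl, Sum.elim_inr, map_sub, map_mul]
  ring

lemma eval0_theta (i : Fin n) (g : MvPolynomial (Fin n ⊕ Fin n) K) :
    Polynomial.eval 0 (theta K i g) = psi K i g := by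
  induction g using MvPolynomial.induction_on with
  | C a => simp [theta, psi, algebraMap_eq]
  | add p q hp hq => simp [hp, hq]
  | mul_X p v hp =>
    rw [map_mul, map_mul, Polynomial.eval_mul, hp]
    congr 1
    rcases v with m | m <;> simp [theta, psi]

lemma bedge_ne_zero {i j : Fin n} (hij : i ≠ j) : bedge K i j ≠ 0 := by
  intro h
  have h1 : bedge K i j = monomial (E (fun m => if i = m then 1 else 0)
      (fun m => if j = m then 1 else 0)) 1 - monomial (E (fun m => if j = m then 1 else 0)
      (fun m => if i = m then 1 else 0)) 1 := by
    rw [bedge, X_inl_mul_X_inr, X_inl_mul_X_inr]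
  have h2 : coeff (E (fun m => if i = m then 1 else 0)
      (fun m => if j = m then 1 else 0)) (bedge K i j) = 1 := by
    rw [h1, coeff_sub, coeff_monomial, coeff_monomial, if_pos rfl, if_neg, sub_zero]
    intro hE
    have := congrArg (fun s : (Fin n ⊕ Fin n) →₀ ℕ => s (Sum.inl i)) hE
    simp at this
    exact hij this.symm
  rw [h] at h2
  simp at h2

lemma mem_colon_span_singleton {A : Type} [CommRing A] (N : Ideal A) (h r : A) :
    r ∈ Submodule.colon N (Ideal.span {h}) ↔ r * h ∈ N := by
  rw [Submodule.mem_colon]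
  constructor
  · intro H; simpa [smul_eq_mul] using H h (Ideal.subset_span rfl)
  · rintro H p hp
    obtain ⟨t, rfl⟩ := Ideal.mem_span_singleton'.mp hp
    simpa [smul_eq_mul, mul_comm, mul_assoc, mul_left_comm] using N.mul_mem_left t H

lemma colon_eq {k : ℕ} (hk : 1 ≤ k) (i j : Fin n) (hij : i ≠ j) :
    Submodule.colon (Jn ^ k) (Ideal.span {bedge K i j ^ (k-1)}) = Jn := by
  have hk1 : k - 1 + 1 = k := by omega
  ext g
  rw [mem_colon_span_singleton]
  constructor
  · intro hg
    apply mem_of_psi_zero K i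
    have hmap : Ideal.map (theta K i).toRingHom (Jn ^ k)
        ≤ Ideal.span {(Polynomial.X : Polynomial (MvPolynomial (Fin n ⊕ Fin n) K))^k} := by
      rw [Ideal.map_pow, ← Ideal.span_singleton_pow]
      apply Ideal.pow_right_mono
      have hspan : (beIdeal K (⊤ : SimpleGraph (Fin n)))
          = Ideal.span {p | ∃ a b : Fin n, (⊤ : SimpleGraph (Fin n)).Adj a b ∧ p = bedge K a b} :=
        rfl
      rw [hspan, Ideal.map_span, Ideal.span_le]
      rintro p ⟨p', ⟨a, b, hab, rfl⟩, rfl⟩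
      simp only [SetLike.mem_coe, AlgHom.toRingHom_eq_coe, RingHom.coe_coe]
      rw [theta_bedge]
      exact Ideal.mem_span_singleton.mpr (Dvd.intro _ rfl)
    have h1 := hmap (Ideal.mem_map_of_mem _ hg)
    rw [Ideal.mem_span_singleton] at h1
    simp only [AlgHom.toRingHom_eq_coe, RingHom.coe_coe] at h1
    rw [map_mul, map_pow, theta_bedge, mul_pow, ← Polynomial.C_pow] at h1
    obtain ⟨t, ht⟩ := h1
    have h2 : theta K i g * Polynomial.C ((X (Sum.inl i) * bedge K i j)^(k-1))
        = Polynomial.X * t := by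
      apply mul_left_cancel₀
        (pow_ne_zero (k-1) (Polynomial.X_ne_zero :
          (Polynomial.X : Polynomial (MvPolynomial (Fin n ⊕ Fin n) K)) ≠ 0))
      calc Polynomial.X ^ (k-1) * (theta K i g
            * Polynomial.C ((X (Sum.inl i) * bedge K i j)^(k-1)))
          = theta K i g * (Polynomial.X ^ (k-1)
            * Polynomial.C ((X (Sum.inl i) * bedge K i j)^(k-1))) := by ring
        _ = Polynomial.X ^ k * t := ht
        _ = Polynomial.X ^ (k-1+1) * t := by rw [hk1]
        _ = Polynomial.X ^ (k-1) * (Polynomial.X * t) := by rw [pow_succ, mul_assoc]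
    have h3 : (Polynomial.X : Polynomial (MvPolynomial (Fin n ⊕ Fin n) K))
        ∣ theta K i g * Polynomial.C ((X (Sum.inl i) * bedge K i j)^(k-1)) := ⟨t, h2⟩
    rcases (Polynomial.prime_X.2.2 _ _ h3) with hdvd | hdvd
    · obtain ⟨t', ht'⟩ := hdvd
      rw [← eval0_theta, ht']
      simp
    · exfalso
      rw [Polynomial.X_dvd_iff, Polynomial.coeff_C_zero] at hdvd
      rcases Nat.eq_zero_or_pos (k-1) with h0 | h0
      · rw [h0, pow_zero] at hdvd; exact one_ne_zero hdvd
      · have : X (Sum.inl i) * bedge K i j = 0 :=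
          pow_eq_zero_iff (by omega) |>.mp hdvd
        rcases mul_eq_zero.mp this with h | h
        · exact MvPolynomial.X_ne_zero _ h
        · exact bedge_ne_zero K hij h
  · intro hg
    have h1 : bedge K i j ^ (k-1) ∈ Jn^(k-1) := Ideal.pow_mem_pow (bedge_mem K hij) _
    have h2 := Ideal.mul_mem_mul hg h1
    rwa [← pow_succ', hk1] at h2

end Aux5
section Aux6
variable (K : Type) [Field K] {n : ℕ}
open MvPolynomial
local notation "R" => MvPolynomial (Fin n ⊕ Fin n) K
local notation "Jn" => beIdeal K (⊤ : SimpleGraph (Fin n))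

noncomputable def sc : MvPolynomial (Fin n ⊕ Fin n) K →ₐ[K]
    Polynomial (MvPolynomial (Fin n ⊕ Fin n) K) :=
  aeval (fun v => Polynomial.X * Polynomial.C (X v))

lemma sc_monomial (d : (Fin n ⊕ Fin n) →₀ ℕ) (r : K) :
    sc K (monomial d r) = Polynomial.X ^ (d.sum fun _ e => e) * Polynomial.C (monomial d r) := by
  induction d using Finsupp.induction generalizing r with
  | zero => simp [sc, algebraMap_eq]
  | single_add a e d' ha he IH =>
    have hsplit : monomial (Finsupp.single a e + d') r
        = monomial (Finsupp.single a e) 1 * monomial d' r := by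
      rw [monomial_mul, one_mul]
    have hsum : ((Finsupp.single a e + d').sum fun _ e => e)
        = e + (d'.sum fun _ e => e) := by
      rw [Finsupp.sum_add_index (fun _ _ => rfl) (fun _ _ _ _ => rfl),
        Finsupp.sum_single_index rfl]
    rw [hsplit, map_mul, IH, ← X_pow_eq_monomial, map_pow, hsum]
    have hX : sc K (X a) = Polynomial.X * Polynomial.C (X a) := by simp [sc]
    rw [hX, mul_pow, ← Polynomial.C_pow, map_mul]
    ring

lemma sc_homogeneous {p : MvPolynomial (Fin n ⊕ Fin n) K} {e : ℕ} (hp : p.IsHomogeneous e) :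
    sc K p = Polynomial.X ^ e * Polynomial.C p := by
  conv_lhs => rw [← support_sum_monomial_coeff p]
  conv_rhs => rw [← support_sum_monomial_coeff p]
  rw [map_sum, map_sum, Finset.mul_sum]
  apply Finset.sum_congr rfl
  intro d hd
  rw [sc_monomial]
  congr 2
  have hdeg := hp (mem_support_iff.mp hd)
  rw [← hdeg]
  simp [Finsupp.weight_apply, Finsupp.sum]

lemma bedge_homog (a b : Fin n) : (bedge K a b).IsHomogeneous 2 := by
  apply IsHomogeneous.sub
  · exact (isHomogeneous_X _ _).mul (isHomogeneous_X _ _)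
  · exact (isHomogeneous_X _ _).mul (isHomogeneous_X _ _)

lemma homog_small_zero {k : ℕ} {q : MvPolynomial (Fin n ⊕ Fin n) K} {e : ℕ}
    (hq : q.IsHomogeneous e) (hqk : q ∈ Jn^k) (he : e < 2*k) : q = 0 := by
  have hmap : Ideal.map (sc K (n := n)).toRingHom (Jn ^ k)
      ≤ Ideal.span {(Polynomial.X : Polynomial (MvPolynomial (Fin n ⊕ Fin n) K))^(2*k)} := by
    rw [Ideal.map_pow]
    have h2k : (Ideal.span {(Polynomial.X : Polynomial (MvPolynomial (Fin n ⊕ Fin n) K))^2})^k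
        = Ideal.span {(Polynomial.X : Polynomial (MvPolynomial (Fin n ⊕ Fin n) K))^(2*k)} := by
      rw [Ideal.span_singleton_pow, ← pow_mul]
    rw [← h2k]
    apply Ideal.pow_right_mono
    have hspan : (beIdeal K (⊤ : SimpleGraph (Fin n)))
        = Ideal.span {p | ∃ a b : Fin n, (⊤ : SimpleGraph (Fin n)).Adj a b ∧ p = bedge K a b} :=
      rfl
    rw [hspan, Ideal.map_span, Ideal.span_le]
    rintro p ⟨p', ⟨a, b, hab, rfl⟩, rfl⟩
    simp only [SetLike.mem_coe, AlgHom.toRingHom_eq_coe, RingHom.coe_coe]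
    rw [sc_homogeneous K (bedge_homog K a b)]
    exact Ideal.mem_span_singleton.mpr (Dvd.intro _ rfl)
  have h1 := hmap (Ideal.mem_map_of_mem _ hqk)
  rw [Ideal.mem_span_singleton] at h1
  simp only [AlgHom.toRingHom_eq_coe, RingHom.coe_coe] at h1
  rw [sc_homogeneous K hq] at h1
  obtain ⟨t, ht⟩ := h1
  set M := 2*k - e with hM
  have h2 : (Polynomial.C q : Polynomial (MvPolynomial (Fin n ⊕ Fin n) K))
      = Polynomial.X ^ M * t := by
    apply mul_left_cancel₀
      (pow_ne_zero e (Polynomial.X_ne_zero :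
        (Polynomial.X : Polynomial (MvPolynomial (Fin n ⊕ Fin n) K)) ≠ 0))
    rw [ht, show 2*k = e + M by omega, pow_add]
    ring
  have h3 := congrArg (fun p : Polynomial (MvPolynomial (Fin n ⊕ Fin n) K) => p.coeff 0) h2
  simp only [Polynomial.coeff_C_zero, Polynomial.mul_coeff_zero, Polynomial.coeff_X_pow] at h3
  rw [if_neg (by omega : ¬ (0 = M))] at h3
  simpa using h3

end Aux6

section Aux7
variable (K : Type) [Field K] {n : ℕ}
open MvPolynomial
local notation "R" => MvPolynomial (Fin n ⊕ Fin n) K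
local notation "Jn" => beIdeal K (⊤ : SimpleGraph (Fin n))

lemma Jn_prime (i : Fin n) : (Jn).IsPrime := by
  have h : (Jn) = RingHom.ker (psi K i).toRingHom := by
    apply le_antisymm (Jn_le_ker K i)
    intro g hg
    exact mem_of_psi_zero K i g hg
  rw [h]
  exact RingHom.ker_isPrime _

lemma ann_eq_colon (N : Ideal R) (x : R) :
    (Submodule.span R {(Ideal.Quotient.mk N x : R ⧸ N)}).annihilator
      = Submodule.colon N (Ideal.span {x}) := by
  ext r
  rw [Submodule.mem_annihilator_span_singleton, mem_colon_span_singleton]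
  have hs : r • (Ideal.Quotient.mk N x) = Ideal.Quotient.mk N (r * x) := by
    rw [map_mul]
    rfl
  rw [hs, Ideal.Quotient.eq_zero_iff_mem]

theorem statement_19x {n : ℕ} (hn : 2 ≤ n) (k : ℕ) (hk : 1 ≤ k) :
    vNumber K ((beIdeal K (⊤ : SimpleGraph (Fin n))) ^ k) = 2 * k - 2 ∧
      ∀ i j : Fin n, i ≠ j →
        Submodule.colon ((beIdeal K (⊤ : SimpleGraph (Fin n))) ^ k)
            (Ideal.span {bedge K i j ^ (k - 1)}) =
          beIdeal K (⊤ : SimpleGraph (Fin n)) := by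
  have hcolon : ∀ i j : Fin n, i ≠ j →
      Submodule.colon ((beIdeal K (⊤ : SimpleGraph (Fin n))) ^ k)
        (Ideal.span {bedge K i j ^ (k - 1)}) = beIdeal K (⊤ : SimpleGraph (Fin n)) :=
    fun i j hij => colon_eq K hk i j hij
  refine ⟨?_, hcolon⟩
  set i0 : Fin n := ⟨0, by omega⟩
  set i1 : Fin n := ⟨1, by omega⟩
  have hne : i0 ≠ i1 := by simp [i0, i1, Fin.mk.injEq]
  set S := {d : ℕ | ∃ f : MvPolynomial (Fin n ⊕ Fin n) K, f.IsHomogeneous d ∧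
    IsAssociatedPrime (Submodule.colon ((beIdeal K (⊤ : SimpleGraph (Fin n))) ^ k)
      (Ideal.span {f})) (MvPolynomial (Fin n ⊕ Fin n) K ⧸
        ((beIdeal K (⊤ : SimpleGraph (Fin n))) ^ k))} with hS
  have hmem : (2 * k - 2) ∈ S := by
    refine ⟨bedge K i0 i1 ^ (k - 1), ?_, ?_⟩
    · have := (bedge_homog K i0 i1).pow (k - 1)
      have h2 : 2 * (k - 1) = 2 * k - 2 := by omega
      rwa [h2] at this
    · rw [hcolon i0 i1 hne]
      refine ⟨Jn_prime K i0, Ideal.Quotient.mk _ (bedge K i0 i1 ^ (k-1)), ?_⟩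
      have hc : (⊥ : Submodule (MvPolynomial (Fin n ⊕ Fin n) K)
          (MvPolynomial (Fin n ⊕ Fin n) K ⧸ (beIdeal K (⊤ : SimpleGraph (Fin n))) ^ k)).colon
          {Ideal.Quotient.mk _ (bedge K i0 i1 ^ (k-1))} = Submodule.colon
            ((beIdeal K (⊤ : SimpleGraph (Fin n))) ^ k) (Ideal.span {bedge K i0 i1 ^ (k-1)}) := by
        rw [← ann_eq_colon]
        ext r
        rw [Submodule.mem_annihilator_span_singleton, Submodule.mem_colon_singleton,
          Submodule.mem_bot]
      rw [hc, hcolon i0 i1 hne, (Jn_prime K i0).radical]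
  have hlow : ∀ d ∈ S, 2 * k - 2 ≤ d := by
    intro d hd
    by_contra hlt
    push_neg at hlt
    obtain ⟨f, hfh, hassoc⟩ := hd
    have hP := hassoc.1
    have hfnot : f ∉ (beIdeal K (⊤ : SimpleGraph (Fin n))) ^ k := by
      intro hf
      apply hP.ne_top
      rw [eq_top_iff]
      intro r _
      exact (mem_colon_span_singleton _ _ _).mpr (Ideal.mul_mem_left _ r hf)
    have hJkP : (beIdeal K (⊤ : SimpleGraph (Fin n))) ^ k
        ≤ Submodule.colon ((beIdeal K (⊤ : SimpleGraph (Fin n))) ^ k) (Ideal.span {f}) := by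
      intro r hr
      exact (mem_colon_span_singleton _ _ _).mpr (Ideal.mul_mem_right f _ hr)
    have hbP : bedge K i0 i1 ∈ Submodule.colon ((beIdeal K (⊤ : SimpleGraph (Fin n))) ^ k)
        (Ideal.span {f}) :=
      hP.mem_of_pow_mem k (hJkP (Ideal.pow_mem_pow (bedge_mem K hne) k))
    have hq : bedge K i0 i1 * f ∈ (beIdeal K (⊤ : SimpleGraph (Fin n))) ^ k :=
      (mem_colon_span_singleton _ _ _).mp hbP
    have hqh : (bedge K i0 i1 * f).IsHomogeneous (2 + d) := (bedge_homog K i0 i1).mul hfh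
    have hq0 : bedge K i0 i1 * f = 0 := homog_small_zero K hqh hq (by omega)
    rcases mul_eq_zero.mp hq0 with h | h
    · exact bedge_ne_zero K hne h
    · exact hfnot (h ▸ zero_mem _)
  have : vNumber K ((beIdeal K (⊤ : SimpleGraph (Fin n))) ^ k) = sInf S := rfl
  rw [this]
  exact le_antisymm (Nat.sInf_le hmem) (hlow _ (Nat.sInf_mem ⟨_, hmem⟩))

end Aux7

theorem statement_19 {n : ℕ} (hn : 2 ≤ n) (k : ℕ) (hk : 1 ≤ k) :
    vNumber K ((beIdeal K (⊤ : SimpleGraph (Fin n))) ^ k) = 2 * k - 2 ∧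
      ∀ i j : Fin n, i ≠ j →
        Submodule.colon ((beIdeal K (⊤ : SimpleGraph (Fin n))) ^ k)
            (Ideal.span {bedge K i j ^ (k - 1)}) =
          beIdeal K (⊤ : SimpleGraph (Fin n)) :=
  statement_19x K hn k hk

end Paper
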